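/- Let (Ω, 𝔉, P) be a probability space with a filtration 𝒢_1 ⊆ 𝒢_2 ⊆ ⋯ ⊆ 𝒢_n ⊆ 𝔉, and let ε_1, …, ε_n be {−1,1}-valued random variables such that for each t ∈ {1, …, n}, ε_t is uniformly distributed on {−1,1}, ε_t is independent of 𝒢_t, and ε_t is 𝒢_(t+1)-measurable for t < n. Let S_1, …, S_n be measurable spaces and for each t let s_t be an S_t-valued 𝒢_t-measurable random variable. Let 𝒜 be a finite nonempty set of tuples 𝐚 = (a_1, …, a_n) with each a_t : S_t → ℝ measurable. Then for every λ > 0, E[sup_(𝐚∈𝒜) Σ_(t=1)^n (a_t(s_t)·ε_t − λ·a_t(s_t)²)] ≤ log|𝒜|/(2λ), where the expectation is well-defined in [−∞, ∞) because the integrand is bounded above by n/(4λ). -/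

import Mathlib

open MeasureTheory ProbabilityTheory

namespace Stmt12Aux

lemma integrable_of_bound {Ω : Type*} {m0 : MeasurableSpace Ω} (μ : Measure Ω)
    [IsFiniteMeasure μ] (f : Ω → ℝ) (hf : AEStronglyMeasurable f μ) (C : ℝ)
    (h : ∀ ω, |f ω| ≤ C) : Integrable f μ :=
  (integrable_const C).mono' hf (Filter.Eventually.of_forall (by simpa [Real.norm_eq_abs] using h))

lemma exp_pm' (c e : ℝ) (he : e = 1 ∨ e = -1) :
    Real.exp (c * e) = Real.cosh c + e * Real.sinh c := by
  rcases he with h | h <;> subst h <;> simp [Real.cosh_eq, Real.sinh_eq] <;> ring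

lemma term_le' {lam : ℝ} (hlam : 0 < lam) (x e : ℝ) (he : e = 1 ∨ e = -1) :
    x * e - lam * x ^ 2 ≤ 1 / (4 * lam) := by
  rw [le_div_iff₀ (by positivity : (0:ℝ) < 4 * lam)]
  rcases he with h | h <;> subst h <;>
    nlinarith [sq_nonneg (2 * lam * x - 1), sq_nonneg (2 * lam * x + 1)]

lemma sinh_abs_le_cosh (x : ℝ) : |Real.sinh x| ≤ Real.cosh x := by
  rw [abs_le]
  constructor <;>
  · simp only [Real.cosh_eq, Real.sinh_eq, neg_le, neg_div]
    nlinarith [Real.exp_pos x, Real.exp_pos (-x)]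

lemma alg_id (c x N l : ℝ) (hN : N ≠ 0) (hl : l ≠ 0) :
    c + (x / N - 1) / l = (c - 1 / l) + (1 / (l * N)) * x := by
  field_simp
  ring

lemma lintegral_restrict_le_half {Ω : Type*} {m0 : MeasurableSpace Ω} (μ : Measure Ω)
    {𝒢 : MeasurableSpace Ω} (h𝒢 : 𝒢 ≤ m0) (D : Set Ω)
    (h : ∀ C : Set Ω, MeasurableSet[𝒢] C → μ (D ∩ C) ≤ μ C / 2)
    (f : Ω → ENNReal) (hf : Measurable[𝒢] f) :
    ∫⁻ x in D, f x ∂μ ≤ (∫⁻ x, f x ∂μ) / 2 := by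
  have hle : (μ.restrict D).trim h𝒢 ≤ (((2 : ENNReal)⁻¹ • μ)).trim h𝒢 := by
    rw [Measure.le_iff]
    intro s hs
    rw [trim_measurableSet_eq h𝒢 hs, trim_measurableSet_eq h𝒢 hs,
      Measure.restrict_apply (h𝒢 _ hs), Set.inter_comm, Measure.smul_apply, smul_eq_mul]
    calc μ (D ∩ s) ≤ μ s / 2 := h s hs
    _ = 2⁻¹ * μ s := by rw [div_eq_mul_inv, mul_comm]
  calc ∫⁻ x in D, f x ∂μ = ∫⁻ x, f x ∂((μ.restrict D).trim h𝒢) := (lintegral_trim h𝒢 hf).symm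
    _ ≤ ∫⁻ x, f x ∂((((2 : ENNReal)⁻¹ • μ)).trim h𝒢) := lintegral_mono' hle le_rfl
    _ = 2⁻¹ * ∫⁻ x, f x ∂μ := by rw [lintegral_trim h𝒢 hf, lintegral_smul_measure, smul_eq_mul]
    _ = (∫⁻ x, f x ∂μ) / 2 := by rw [div_eq_mul_inv, mul_comm]

lemma lintegral_restrict_ge_half {Ω : Type*} {m0 : MeasurableSpace Ω} (μ : Measure Ω)
    {𝒢 : MeasurableSpace Ω} (h𝒢 : 𝒢 ≤ m0) (D : Set Ω)
    (h : ∀ C : Set Ω, MeasurableSet[𝒢] C → μ C / 2 ≤ μ (D ∩ C))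
    (f : Ω → ENNReal) (hf : Measurable[𝒢] f) :
    (∫⁻ x, f x ∂μ) / 2 ≤ ∫⁻ x in D, f x ∂μ := by
  have hle : (((2 : ENNReal)⁻¹ • μ)).trim h𝒢 ≤ (μ.restrict D).trim h𝒢 := by
    rw [Measure.le_iff]
    intro s hs
    rw [trim_measurableSet_eq h𝒢 hs, trim_measurableSet_eq h𝒢 hs,
      Measure.restrict_apply (h𝒢 _ hs), Set.inter_comm, Measure.smul_apply, smul_eq_mul]
    calc 2⁻¹ * μ s = μ s / 2 := by rw [div_eq_mul_inv, mul_comm]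
    _ ≤ μ (D ∩ s) := h s hs
  calc (∫⁻ x, f x ∂μ) / 2 = 2⁻¹ * ∫⁻ x, f x ∂μ := by rw [div_eq_mul_inv, mul_comm]
    _ = ∫⁻ x, f x ∂((((2 : ENNReal)⁻¹ • μ)).trim h𝒢) := by
        rw [lintegral_trim h𝒢 hf, lintegral_smul_measure, smul_eq_mul]
    _ ≤ ∫⁻ x, f x ∂((μ.restrict D).trim h𝒢) := lintegral_mono' hle le_rfl
    _ = ∫⁻ x in D, f x ∂μ := lintegral_trim h𝒢 hf


lemma mart {Ω : Type*} {m0 : MeasurableSpace Ω} (μ : Measure Ω) [IsProbabilityMeasure μ]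
    {n : ℕ} (G : Fin n → MeasurableSpace Ω)
    (hGmono : ∀ s t : Fin n, s ≤ t → G s ≤ G t) (hGle : ∀ t, G t ≤ m0)
    (ε : Fin n → Ω → ℝ)
    (hεval : ∀ t ω, ε t ω = 1 ∨ ε t ω = -1)
    (hεunif : ∀ t, μ {ω | ε t ω = 1} = 1 / 2)
    (hεindep : ∀ t, Indep (MeasurableSpace.comap (ε t) (inferInstance : MeasurableSpace ℝ))
      (G t) μ)
    (hεmeas : ∀ (t : Fin n) (ht : t.val + 1 < n), Measurable[G ⟨t.val + 1, ht⟩] (ε t))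
    (b : Fin n → Ω → ℝ) (hb : ∀ t, Measurable[G t] (b t))
    {lam : ℝ} (hlam : 0 < lam) :
    ∀ k : ℕ, k < n →
      ∫ ω, Real.exp (2 * lam * ∑ t ∈ Finset.univ.filter (fun t : Fin n => t.val < k),
        (b t ω * ε t ω - lam * (b t ω) ^ 2)) ∂μ ≤ 1 := by
  -- abbreviation
  set pf : ℕ → Ω → ℝ := fun k ω => ∑ t ∈ Finset.univ.filter (fun t : Fin n => t.val < k),
      (b t ω * ε t ω - lam * (b t ω) ^ 2) with hpf
  -- measurability of prefix
  have hpfmeas : ∀ (k : ℕ) (hk : k < n), Measurable[G ⟨k, hk⟩] (pf k) := by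
    intro k hk
    refine Finset.measurable_sum _ fun t ht => ?_
    have htk : t.val < k := by simpa using ht
    have h1 : t.val + 1 < n := by omega
    have hεm : Measurable[G ⟨k, hk⟩] (ε t) :=
      (hεmeas t h1).mono (hGmono ⟨t.val + 1, h1⟩ ⟨k, hk⟩ (by simp [Fin.mk_le_mk]; omega)) le_rfl
    have hbm : Measurable[G ⟨k, hk⟩] (b t) :=
      (hb t).mono (hGmono t ⟨k, hk⟩ (by simp [Fin.le_def]; omega)) le_rfl
    exact (hbm.mul hεm).sub ((hbm.pow_const 2).const_mul lam)
  -- global bound on the prefix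
  have hpfle : ∀ (k : ℕ) (ω : Ω), pf k ω ≤ n * (1 / (4 * lam)) := by
    intro k ω
    calc pf k ω ≤ ∑ t ∈ Finset.univ.filter (fun t : Fin n => t.val < k), (1 / (4 * lam)) :=
          Finset.sum_le_sum fun t _ => term_le' hlam _ _ (hεval t ω)
      _ = (Finset.univ.filter (fun t : Fin n => t.val < k)).card * (1 / (4 * lam)) := by
          rw [Finset.sum_const, nsmul_eq_mul]
      _ ≤ n * (1 / (4 * lam)) := by
          have hcard : (Finset.univ.filter (fun t : Fin n => t.val < k)).card ≤ n := by
            calc _ ≤ (Finset.univ : Finset (Fin n)).card := Finset.card_filter_le _ _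
            _ = n := by simp
          have : (0:ℝ) ≤ 1 / (4 * lam) := by positivity
          exact mul_le_mul_of_nonneg_right (by exact_mod_cast hcard) this
  set Cst : ℝ := Real.exp (2 * lam * (n * (1 / (4 * lam)))) with hCst
  have hFbd : ∀ (k : ℕ) (ω : Ω), Real.exp (2 * lam * pf k ω) ≤ Cst := fun k ω =>
    Real.exp_le_exp.mpr (mul_le_mul_of_nonneg_left (hpfle k ω) (by positivity))
  intro k
  induction k with
  | zero =>
      intro _
      have h0 : (Finset.univ.filter (fun t : Fin n => t.val < 0)) = (∅ : Finset (Fin n)) := by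
        ext t; simp
      simp only [hpf, h0, Finset.sum_empty, mul_zero, Real.exp_zero]
      simp
  | succ k ih =>
      intro hk1
      have hk : k < n := by omega
      have ihk := ih hk
      set tk : Fin n := ⟨k, hk⟩ with htk
      set F : Ω → ℝ := fun ω => Real.exp (2 * lam * pf k ω) with hF
      set β : Ω → ℝ := fun ω => b tk ω with hβ
      set e : Ω → ℝ := fun ω => ε tk ω with he
      set H1 : Ω → ℝ := fun ω =>
        F ω * (Real.cosh (2 * lam * β ω) * Real.exp (-(2 * lam ^ 2 * β ω ^ 2))) with hH1
      set H2 : Ω → ℝ := fun ω =>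
        F ω * (Real.sinh (2 * lam * β ω) * Real.exp (-(2 * lam ^ 2 * β ω ^ 2))) with hH2
      -- the filter splits
      have hfil : Finset.univ.filter (fun t : Fin n => t.val < k + 1)
          = insert tk (Finset.univ.filter (fun t : Fin n => t.val < k)) := by
        ext t
        simp [htk, Fin.ext_iff]
        omega
      have hnot : tk ∉ Finset.univ.filter (fun t : Fin n => t.val < k) := by simp [htk]
      -- key pointwise identity
      have hid : ∀ ω, Real.exp (2 * lam * pf (k + 1) ω) = H1 ω + H2 ω * e ω := by
        intro ω
        have hsum : pf (k + 1) ω = (β ω * e ω - lam * β ω ^ 2) + pf k ω := by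
          simp only [hpf, hfil, Finset.sum_insert hnot]; rfl
        have harg : 2 * lam * pf (k + 1) ω
            = 2 * lam * pf k ω + (-(2 * lam ^ 2 * β ω ^ 2) + (2 * lam * β ω) * e ω) := by
          rw [hsum]; ring
        rw [harg, Real.exp_add, Real.exp_add,
          exp_pm' (2 * lam * β ω) (e ω) (hεval tk ω)]
        simp only [hH1, hH2, hF]
        ring
      -- measurability
      have hFmeasG : Measurable[G tk] F := (hpfmeas k hk).const_mul (2 * lam) |>.exp
      have hβmeasG : Measurable[G tk] β := hb tk
      have hcosG : Measurable[G tk] fun ω =>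
          Real.cosh (2 * lam * β ω) * Real.exp (-(2 * lam ^ 2 * β ω ^ 2)) :=
        ((Real.measurable_cosh.comp ((hβmeasG.const_mul (2 * lam))))).mul
          ((Real.measurable_exp.comp ((hβmeasG.pow_const 2).const_mul (2 * lam ^ 2)).neg))
      have hsinG : Measurable[G tk] fun ω =>
          Real.sinh (2 * lam * β ω) * Real.exp (-(2 * lam ^ 2 * β ω ^ 2)) :=
        ((Real.measurable_sinh.comp ((hβmeasG.const_mul (2 * lam))))).mul
          ((Real.measurable_exp.comp ((hβmeasG.pow_const 2).const_mul (2 * lam ^ 2)).neg))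
      have hH1measG : Measurable[G tk] H1 := hFmeasG.mul hcosG
      have hH2measG : Measurable[G tk] H2 := hFmeasG.mul hsinG
      have hH1meas : Measurable H1 := hH1measG.mono (hGle tk) le_rfl
      have hH2meas : Measurable H2 := hH2measG.mono (hGle tk) le_rfl
      have hemeas : Measurable e := (hεmeas tk hk1).mono (hGle _) le_rfl
      have hFmeas : Measurable F := hFmeasG.mono (hGle tk) le_rfl
      -- bounds
      have hfac : ∀ ω, Real.cosh (2 * lam * β ω) * Real.exp (-(2 * lam ^ 2 * β ω ^ 2)) ≤ 1 := by
        intro ω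
        have h1 : Real.cosh (2 * lam * β ω) ≤ Real.exp ((2 * lam * β ω) ^ 2 / 2) :=
          Real.cosh_le_exp_half_sq _
        have h2 : (2 * lam * β ω) ^ 2 / 2 = 2 * lam ^ 2 * β ω ^ 2 := by ring
        rw [h2] at h1
        calc Real.cosh (2 * lam * β ω) * Real.exp (-(2 * lam ^ 2 * β ω ^ 2))
            ≤ Real.exp (2 * lam ^ 2 * β ω ^ 2) * Real.exp (-(2 * lam ^ 2 * β ω ^ 2)) := by
              exact mul_le_mul_of_nonneg_right h1 (Real.exp_pos _).le
          _ = 1 := by rw [← Real.exp_add]; simp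
      have hfacs : ∀ ω, |Real.sinh (2 * lam * β ω) * Real.exp (-(2 * lam ^ 2 * β ω ^ 2))| ≤ 1 := by
        intro ω
        rw [abs_mul, abs_of_pos (Real.exp_pos _)]
        calc |Real.sinh (2 * lam * β ω)| * Real.exp (-(2 * lam ^ 2 * β ω ^ 2))
            ≤ Real.cosh (2 * lam * β ω) * Real.exp (-(2 * lam ^ 2 * β ω ^ 2)) :=
              mul_le_mul_of_nonneg_right (sinh_abs_le_cosh _) (Real.exp_pos _).le
          _ ≤ 1 := hfac ω
      have hF0 : ∀ ω, 0 ≤ F ω := fun ω => (Real.exp_pos _).le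
      have hH1bd : ∀ ω, H1 ω ≤ F ω := by
        intro ω
        calc H1 ω ≤ F ω * 1 := by
              exact mul_le_mul_of_nonneg_left (hfac ω) (hF0 ω)
          _ = F ω := mul_one _
      have hH10 : ∀ ω, 0 ≤ H1 ω := fun ω =>
        mul_nonneg (hF0 ω) (mul_nonneg (Real.cosh_pos _).le (Real.exp_pos _).le)
      have hH1abs : ∀ ω, |H1 ω| ≤ Cst := fun ω => by
        rw [abs_of_nonneg (hH10 ω)]; exact (hH1bd ω).trans (hFbd k ω)
      have hH2abs : ∀ ω, |H2 ω| ≤ Cst := by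
        intro ω
        rw [hH2, abs_mul, abs_of_nonneg (hF0 ω)]
        calc F ω * |Real.sinh (2 * lam * β ω) * Real.exp (-(2 * lam ^ 2 * β ω ^ 2))|
            ≤ F ω * 1 := mul_le_mul_of_nonneg_left (hfacs ω) (hF0 ω)
          _ ≤ Cst := by rw [mul_one]; exact hFbd k ω
      -- integrability
      have hIntF : Integrable F μ := integrable_of_bound μ F hFmeas.aestronglyMeasurable Cst
        (fun ω => by rw [abs_of_nonneg (hF0 ω)]; exact hFbd k ω)
      have hIntH1 : Integrable H1 μ := integrable_of_bound μ H1 hH1meas.aestronglyMeasurable Cst hH1abs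
      have hIntH2 : Integrable H2 μ := integrable_of_bound μ H2 hH2meas.aestronglyMeasurable Cst hH2abs
      have hInte : Integrable e μ := integrable_of_bound μ e hemeas.aestronglyMeasurable 1
        (fun ω => by rcases hεval tk ω with h | h <;> simp [he, h])
      have hIntH2e : Integrable (fun ω => H2 ω * e ω) μ :=
        integrable_of_bound μ _ (hH2meas.mul hemeas).aestronglyMeasurable Cst
          (fun ω => by
            rw [abs_mul]
            calc |H2 ω| * |e ω| ≤ Cst * 1 := by
                  refine mul_le_mul (hH2abs ω) ?_ (abs_nonneg _) ((abs_nonneg _).trans (hH2abs ω))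
                  rcases hεval tk ω with h | h <;> simp [he, h]
              _ = Cst := mul_one _)
      -- independence: e is independent of H2
      have hIndep : IndepFun e H2 μ := by
        rw [indepFun_iff_measure_inter_preimage_eq_mul]
        intro B1 B2 hB1 hB2
        exact (Indep_iff _ _ μ).mp (hεindep tk) _ _ ⟨B1, hB1, rfl⟩ (hH2measG hB2)
      -- expectation of e is zero
      have hE1 : MeasurableSet (e ⁻¹' {1}) := hemeas (measurableSet_singleton 1)
      have hμE : μ (e ⁻¹' {1}) = 1 / 2 := by
        have : (e ⁻¹' {1}) = {ω | ε tk ω = 1} := by ext ω; simp [he]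
        rw [this]; exact hεunif tk
      have hee : e = fun ω => 2 * Set.indicator (e ⁻¹' {1}) (fun _ => (1:ℝ)) ω - 1 := by
        funext ω
        rcases hεval tk ω with h | h
        · have hm : ω ∈ e ⁻¹' {1} := by simp [he, Set.mem_preimage, h]
          rw [Set.indicator_of_mem hm]
          simp [he, h]; norm_num
        · have hm : ω ∉ e ⁻¹' {1} := by simp [he, Set.mem_preimage, h]; norm_num
          rw [Set.indicator_of_notMem hm]
          simp [he, h]
      have hInte0 : ∫ ω, e ω ∂μ = 0 := by
        rw [hee]
        rw [integral_sub (((integrable_const (1:ℝ)).indicator hE1).const_mul 2) (integrable_const 1)]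
        rw [integral_const_mul, integral_indicator_const (1:ℝ) hE1, integral_const]
        rw [measureReal_def μ (e ⁻¹' {1}), hμE]
        simp [ENNReal.toReal_div]
      have hH2e0 : ∫ ω, H2 ω * e ω ∂μ = 0 := by
        have := IndepFun.integral_fun_mul_eq_mul_integral hIndep hInte.aestronglyMeasurable hIntH2.aestronglyMeasurable
        have heq : ∫ ω, H2 ω * e ω ∂μ = ∫ ω, e ω * H2 ω ∂μ := by
          congr 1; funext ω; ring
        rw [heq]
        calc ∫ ω, e ω * H2 ω ∂μ = (∫ ω, e ω ∂μ) * ∫ ω, H2 ω ∂μ := this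
          _ = 0 := by rw [hInte0, zero_mul]
      -- conclude
      calc ∫ ω, Real.exp (2 * lam * pf (k + 1) ω) ∂μ
          = ∫ ω, (H1 ω + H2 ω * e ω) ∂μ := by
            refine integral_congr_ae (Filter.Eventually.of_forall fun ω => hid ω)
        _ = (∫ ω, H1 ω ∂μ) + ∫ ω, H2 ω * e ω ∂μ := integral_add hIntH1 hIntH2e
        _ = ∫ ω, H1 ω ∂μ := by rw [hH2e0, add_zero]
        _ ≤ ∫ ω, F ω ∂μ := integral_mono hIntH1 hIntF hH1bd
        _ ≤ 1 := ihk

end Stmt12Aux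


open Stmt12Aux

set_option maxHeartbeats 4000000 in
/-- offset Rademacher finite-class lemma: for a filtration 𝒢_1 ⊆ ⋯ ⊆ 𝒢_n, for
±1-valued random variables ε_t that are uniform, independent of 𝒢_t and 𝒢_{t+1}-measurable,
for 𝒢_t-measurable random variables s_t with values in S_t, and for a finite nonempty class
𝒜 of tuples of measurable coefficient maps a_t : S_t → ℝ, one has for every λ > 0:
E[sup_{a∈𝒜} Σ_t (a_t(s_t)·ε_t − λ·a_t(s_t)²)] ≤ log|𝒜|/(2λ).
(The integrand is bounded above by n/(4λ), so the Bochner integral below agrees with the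
expectation whenever the latter is finite.) -/
theorem stmt12 {Ω : Type*} [m0 : MeasurableSpace Ω] (μ : Measure Ω) [IsProbabilityMeasure μ]
    {n : ℕ} (G : Fin n → MeasurableSpace Ω)
    (hGmono : ∀ s t : Fin n, s ≤ t → G s ≤ G t) (hGle : ∀ t, G t ≤ m0)
    (ε : Fin n → Ω → ℝ)
    (hεval : ∀ t ω, ε t ω = 1 ∨ ε t ω = -1)
    (hεunif : ∀ t, μ {ω | ε t ω = 1} = 1 / 2)
    (hεindep : ∀ t, Indep (MeasurableSpace.comap (ε t) (inferInstance : MeasurableSpace ℝ))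
      (G t) μ)
    (hεmeas : ∀ (t : Fin n) (ht : t.val + 1 < n), Measurable[G ⟨t.val + 1, ht⟩] (ε t))
    (S : Fin n → Type*) [∀ t, MeasurableSpace (S t)]
    (s : (t : Fin n) → Ω → S t) (hs : ∀ t, Measurable[G t] (s t))
    (A : Finset ((t : Fin n) → S t → ℝ)) (hA : A.Nonempty)
    (hAmeas : ∀ a ∈ A, ∀ t, Measurable (a t))
    (lam : ℝ) (hlam : 0 < lam) :
    ∫ ω, A.sup' hA (fun a => ∑ t, (a t (s t ω) * ε t ω - lam * (a t (s t ω)) ^ 2)) ∂μ ≤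
      Real.log A.card / (2 * lam) := by
  classical
  have hNpos : 0 < (A.card : ℝ) := by exact_mod_cast hA.card_pos
  have hN1 : (1 : ℝ) ≤ (A.card : ℝ) := by exact_mod_cast hA.card_pos
  have hlog0 : 0 ≤ Real.log A.card := Real.log_nonneg hN1
  have hRHS0 : 0 ≤ Real.log A.card / (2 * lam) := by positivity
  set g : Ω → ℝ := fun ω =>
    A.sup' hA (fun a => ∑ t, (a t (s t ω) * ε t ω - lam * (a t (s t ω)) ^ 2)) with hg
  by_cases hInt : Integrable g μ
  swap
  · rw [integral_undef hInt]; exact hRHS0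
  rcases Nat.eq_zero_or_pos n with hn0 | hnpos
  · subst hn0
    have hg0 : g = fun _ => 0 := by
      funext ω
      simp [hg]
    rw [hg0]
    simpa using hRHS0
  obtain ⟨m, rfl⟩ : ∃ m, n = m + 1 := ⟨n - 1, by omega⟩
  set lst : Fin (m + 1) := Fin.last m with hlst
  have h𝒢 : G lst ≤ m0 := hGle lst
  have hle𝒢 : ∀ t : Fin (m + 1), G t ≤ G lst := fun t => hGmono t lst (Fin.le_last t)
  set T : ((t : Fin (m + 1)) → S t → ℝ) → Fin (m + 1) → Ω → ℝ :=
    fun a t ω => a t (s t ω) * ε t ω - lam * (a t (s t ω)) ^ 2 with hT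
  set pre : ((t : Fin (m + 1)) → S t → ℝ) → Ω → ℝ :=
    fun a ω => ∑ t ∈ Finset.univ.filter (fun t : Fin (m + 1) => t.val < m), T a t ω with hpre
  set Q : ((t : Fin (m + 1)) → S t → ℝ) → Ω → ℝ := fun a ω => a lst (s lst ω) with hQ
  have hsplit : ∀ a ω, (∑ t, T a t ω) = pre a ω + T a lst ω := by
    intro a ω
    have hsum := Finset.sum_filter_add_sum_filter_not Finset.univ
      (fun t : Fin (m + 1) => t.val < m) (fun t => T a t ω)
    have hone : Finset.univ.filter (fun t : Fin (m + 1) => ¬ t.val < m) = {lst} := by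
      ext t
      simp only [Finset.mem_filter, Finset.mem_univ, true_and, Finset.mem_singleton, hlst,
        Fin.ext_iff, Fin.val_last]
      omega
    rw [← hsum, hone, Finset.sum_singleton]
  set M1 : ((t : Fin (m + 1)) → S t → ℝ) → Ω → ℝ := fun a ω =>
    Real.exp (2 * lam * pre a ω - 2 * lam ^ 2 * (Q a ω) ^ 2) * Real.cosh (2 * lam * Q a ω)
    with hM1
  set R1 : ((t : Fin (m + 1)) → S t → ℝ) → Ω → ℝ := fun a ω =>
    Real.exp (2 * lam * pre a ω - 2 * lam ^ 2 * (Q a ω) ^ 2) * Real.sinh (2 * lam * Q a ω)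
    with hR1
  set M : Ω → ℝ := fun ω => ∑ a ∈ A, M1 a ω with hM
  set R : Ω → ℝ := fun ω => ∑ a ∈ A, R1 a ω with hR
  -- pointwise identity
  have hexp_id : ∀ a ω, Real.exp (2 * lam * (∑ t, T a t ω)) = M1 a ω + ε lst ω * R1 a ω := by
    intro a ω
    have hTlst : T a lst ω = Q a ω * ε lst ω - lam * (Q a ω) ^ 2 := rfl
    have harg : 2 * lam * (∑ t, T a t ω)
        = (2 * lam * pre a ω - 2 * lam ^ 2 * (Q a ω) ^ 2) + (2 * lam * Q a ω) * ε lst ω := by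
      rw [hsplit a ω, hTlst]; ring
    rw [harg, Real.exp_add, exp_pm' (2 * lam * Q a ω) (ε lst ω) (hεval lst ω)]
    simp only [hM1, hR1]
    ring
  -- sup bound
  have hMR : ∀ ω, Real.exp (2 * lam * g ω) ≤ M ω + ε lst ω * R ω := by
    intro ω
    obtain ⟨a₀, ha₀, hs0⟩ := Finset.exists_mem_eq_sup' hA
      (fun a => ∑ t, (a t (s t ω) * ε t ω - lam * (a t (s t ω)) ^ 2))
    have hga : g ω = ∑ t, T a₀ t ω := hs0
    have h1 : Real.exp (2 * lam * g ω) = M1 a₀ ω + ε lst ω * R1 a₀ ω := by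
      rw [hga]; exact hexp_id a₀ ω
    have h2 : M1 a₀ ω + ε lst ω * R1 a₀ ω ≤ ∑ a ∈ A, (M1 a ω + ε lst ω * R1 a ω) := by
      refine Finset.single_le_sum (f := fun a => M1 a ω + ε lst ω * R1 a ω) ?_ ha₀
      intro a ha
      exact le_of_le_of_eq (Real.exp_pos _).le (hexp_id a ω)
    have h3 : ∑ a ∈ A, (M1 a ω + ε lst ω * R1 a ω) = M ω + ε lst ω * R ω := by
      rw [Finset.sum_add_distrib, ← Finset.mul_sum]
    rw [h1]; rw [h3] at h2; exact h2
  -- measurability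
  have hTmeas : ∀ a ∈ A, ∀ t : Fin (m + 1), t.val < m → Measurable[G lst] (T a t) := by
    intro a ha t ht
    have h1 : t.val + 1 < m + 1 := by omega
    have hεt : Measurable[G lst] (ε t) :=
      (hεmeas t h1).mono (hGmono ⟨t.val + 1, h1⟩ lst (by
        simp [Fin.le_def, hlst]; omega)) le_rfl
    have hat : Measurable[G lst] fun ω => a t (s t ω) :=
      (hAmeas a ha t).comp ((hs t).mono (hle𝒢 t) le_rfl)
    exact (hat.mul hεt).sub ((hat.pow_const 2).const_mul lam)
  have hpremeas : ∀ a ∈ A, Measurable[G lst] (pre a) := by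
    intro a ha
    refine Finset.measurable_sum _ fun t ht => ?_
    exact hTmeas a ha t (by simpa using ht)
  have hQmeas : ∀ a ∈ A, Measurable[G lst] (Q a) := fun a ha =>
    (hAmeas a ha lst).comp ((hs lst).mono (hle𝒢 lst) le_rfl)
  have hM1meas : ∀ a ∈ A, Measurable[G lst] (M1 a) := by
    intro a ha
    exact ((((hpremeas a ha).const_mul (2 * lam)).sub
      (((hQmeas a ha).pow_const 2).const_mul (2 * lam ^ 2))).exp).mul
      (Real.measurable_cosh.comp ((hQmeas a ha).const_mul (2 * lam)))
  have hR1meas : ∀ a ∈ A, Measurable[G lst] (R1 a) := by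
    intro a ha
    exact ((((hpremeas a ha).const_mul (2 * lam)).sub
      (((hQmeas a ha).pow_const 2).const_mul (2 * lam ^ 2))).exp).mul
      (Real.measurable_sinh.comp ((hQmeas a ha).const_mul (2 * lam)))
  have hMmeas𝒢 : Measurable[G lst] M := Finset.measurable_sum _ fun a ha => hM1meas a ha
  have hRmeas𝒢 : Measurable[G lst] R := Finset.measurable_sum _ fun a ha => hR1meas a ha
  have hMmeas : Measurable M := hMmeas𝒢.mono h𝒢 le_rfl
  have hRmeas : Measurable R := hRmeas𝒢.mono h𝒢 le_rfl
  -- bounds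
  set CP : ℝ := Real.exp (2 * lam * ((m + 1) * (1 / (4 * lam)))) with hCP
  have hCP0 : 0 < CP := Real.exp_pos _
  have hprele : ∀ a ω, pre a ω ≤ (m + 1) * (1 / (4 * lam)) := by
    intro a ω
    calc pre a ω ≤ ∑ t ∈ Finset.univ.filter (fun t : Fin (m + 1) => t.val < m),
          (1 / (4 * lam)) := Finset.sum_le_sum fun t _ => term_le' hlam _ _ (hεval t ω)
      _ = (Finset.univ.filter (fun t : Fin (m + 1) => t.val < m)).card * (1 / (4 * lam)) := by
          rw [Finset.sum_const, nsmul_eq_mul]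
      _ ≤ (m + 1) * (1 / (4 * lam)) := by
          have hcard : (Finset.univ.filter (fun t : Fin (m + 1) => t.val < m)).card ≤ m + 1 := by
            calc _ ≤ (Finset.univ : Finset (Fin (m + 1))).card := Finset.card_filter_le _ _
              _ = m + 1 := by simp
          have hpos : (0 : ℝ) ≤ 1 / (4 * lam) := by positivity
          have : ((Finset.univ.filter (fun t : Fin (m + 1) => t.val < m)).card : ℝ)
              ≤ (m + 1 : ℝ) := by exact_mod_cast hcard
          exact mul_le_mul_of_nonneg_right this hpos
  have hexppre_bd : ∀ a ω, Real.exp (2 * lam * pre a ω) ≤ CP := fun a ω =>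
    Real.exp_le_exp.mpr (mul_le_mul_of_nonneg_left (hprele a ω) (by positivity))
  have hM1le : ∀ a ω, M1 a ω ≤ Real.exp (2 * lam * pre a ω) := by
    intro a ω
    have h1 : Real.cosh (2 * lam * Q a ω) ≤ Real.exp (2 * lam ^ 2 * (Q a ω) ^ 2) := by
      have := Real.cosh_le_exp_half_sq (2 * lam * Q a ω)
      have h2 : (2 * lam * Q a ω) ^ 2 / 2 = 2 * lam ^ 2 * (Q a ω) ^ 2 := by ring
      rwa [h2] at this
    calc M1 a ω ≤ Real.exp (2 * lam * pre a ω - 2 * lam ^ 2 * (Q a ω) ^ 2) *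
          Real.exp (2 * lam ^ 2 * (Q a ω) ^ 2) :=
          mul_le_mul_of_nonneg_left h1 (Real.exp_pos _).le
      _ = Real.exp (2 * lam * pre a ω) := by rw [← Real.exp_add]; ring_nf
  have hM10 : ∀ a ω, 0 ≤ M1 a ω := fun a ω =>
    mul_nonneg (Real.exp_pos _).le (Real.cosh_pos _).le
  have hM1bd : ∀ a ω, M1 a ω ≤ CP := fun a ω => (hM1le a ω).trans (hexppre_bd a ω)
  have hR1abs : ∀ a ω, |R1 a ω| ≤ M1 a ω := by
    intro a ω
    rw [hR1, abs_mul, abs_of_pos (Real.exp_pos _)]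
    exact mul_le_mul_of_nonneg_left (sinh_abs_le_cosh _) (Real.exp_pos _).le
  have hM0 : ∀ ω, 0 ≤ M ω := fun ω => Finset.sum_nonneg fun a _ => hM10 a ω
  have hMbd : ∀ ω, M ω ≤ A.card * CP := by
    intro ω
    calc M ω ≤ ∑ _a ∈ A, CP := Finset.sum_le_sum fun a _ => hM1bd a ω
      _ = A.card * CP := by rw [Finset.sum_const, nsmul_eq_mul]
  have hRabs : ∀ ω, |R ω| ≤ A.card * CP := by
    intro ω
    calc |R ω| ≤ ∑ a ∈ A, |R1 a ω| := Finset.abs_sum_le_sum_abs _ _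
      _ ≤ ∑ a ∈ A, CP := Finset.sum_le_sum fun a _ => (hR1abs a ω).trans (hM1bd a ω)
      _ = A.card * CP := by rw [Finset.sum_const, nsmul_eq_mul]
  -- integral of M1 is at most 1
  have hIntM1 : ∀ a ∈ A, Integrable (M1 a) μ := fun a ha =>
    integrable_of_bound μ _ ((hM1meas a ha).mono h𝒢 le_rfl).aestronglyMeasurable CP
      (fun ω => by rw [abs_of_nonneg (hM10 a ω)]; exact hM1bd a ω)
  have hintM1 : ∀ a ∈ A, ∫ ω, M1 a ω ∂μ ≤ 1 := by
    intro a ha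
    have hbmeas : ∀ t : Fin (m + 1), Measurable[G t] fun ω => a t (s t ω) := fun t =>
      (hAmeas a ha t).comp (hs t)
    have hmart := mart μ G hGmono hGle ε hεval hεunif hεindep hεmeas
      (fun t ω => a t (s t ω)) hbmeas hlam m (by omega)
    have hIntpre : Integrable (fun ω => Real.exp (2 * lam * pre a ω)) μ :=
      integrable_of_bound μ _
        ((((hpremeas a ha).const_mul (2 * lam)).exp).mono h𝒢 le_rfl).aestronglyMeasurable CP
        (fun ω => by rw [abs_of_pos (Real.exp_pos _)]; exact hexppre_bd a ω)
    calc ∫ ω, M1 a ω ∂μ ≤ ∫ ω, Real.exp (2 * lam * pre a ω) ∂μ :=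
          integral_mono (hIntM1 a ha) hIntpre (hM1le a)
      _ ≤ 1 := hmart
  have hIntM : Integrable M μ := integrable_finset_sum _ fun a ha => hIntM1 a ha
  have hintM : ∫ ω, M ω ∂μ ≤ (A.card : ℝ) := by
    rw [hM]
    rw [integral_finset_sum _ fun a ha => hIntM1 a ha]
    calc ∑ a ∈ A, ∫ ω, M1 a ω ∂μ ≤ ∑ _a ∈ A, (1 : ℝ) :=
          Finset.sum_le_sum fun a ha => hintM1 a ha
      _ = A.card := by simp
  -- independence set facts
  set E : Set Ω := ε lst ⁻¹' {1} with hE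
  have hEC : ∀ C : Set Ω, MeasurableSet[G lst] C → μ (E ∩ C) = μ C / 2 := by
    intro C hC
    have h1 := (Indep_iff _ _ μ).mp (hεindep lst) E C (MeasurableSpace.measurableSet_comap.mpr ⟨{1}, measurableSet_singleton 1, rfl⟩) hC
    have h2 : μ E = 1 / 2 := by
      have h3 : E = {ω | ε lst ω = 1} := by ext ω; simp [hE]
      rw [h3]; exact hεunif lst
    rw [h1, h2, one_div, ← ENNReal.div_eq_inv_mul]
  -- the a.e. measurable machinery
  have hgaesm : AEStronglyMeasurable g μ := hInt.aestronglyMeasurable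
  set gm : Ω → ℝ := hgaesm.mk g with hgmdef
  have hgmmeas : Measurable gm := hgaesm.stronglyMeasurable_mk.measurable
  have hgg : g =ᵐ[μ] gm := hgaesm.ae_eq_mk
  set k0 : Ω → ℝ := fun ω => Real.exp (2 * lam * gm ω) - M ω with hk0
  set kk : Ω → ℝ := fun ω => Real.exp (2 * lam * g ω) - M ω with hkk
  have hkk0 : kk =ᵐ[μ] k0 := hgg.mono fun ω h => by simp only [hkk, hk0, h]
  have hk0meas : Measurable k0 := ((hgmmeas.const_mul (2 * lam)).exp).sub hMmeas
  set B : Set Ω := {ω | -|R ω| < k0 ω} with hB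
  have hBmeas : MeasurableSet B := measurableSet_lt hRmeas.abs.neg hk0meas
  have hkabs : ∀ ω, kk ω ≤ |R ω| := by
    intro ω
    have h1 := hMR ω
    have h2 : ε lst ω * R ω ≤ |R ω| := by
      rcases hεval lst ω with h | h <;> rw [h]
      · rw [one_mul]; exact le_abs_self _
      · rw [neg_one_mul]; exact neg_le_abs _
    simp only [hkk]
    linarith
  have hkER : ∀ ω, kk ω ≤ ε lst ω * R ω := by
    intro ω; have := hMR ω; simp only [hkk]; linarith
  set Nn : Set Ω := {ω | ¬ kk ω = k0 ω} with hNn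
  have hNn0 : μ Nn = 0 := by
    have := hkk0
    rw [Filter.EventuallyEq, ae_iff] at this
    exact this
  -- subset facts
  have hDsub : B ∩ {ω | 0 < R ω} ⊆ E ∪ Nn := by
    rintro ω ⟨hωB, hωR⟩
    by_cases hkeq : kk ω = k0 ω
    · left
      rcases hεval lst ω with h1 | h1
      · simpa [hE] using h1
      · exfalso
        have h2 : kk ω ≤ ε lst ω * R ω := hkER ω
        rw [h1, neg_one_mul] at h2
        have h3 : -|R ω| < k0 ω := hωB
        rw [← hkeq] at h3
        have h4 : |R ω| = R ω := abs_of_pos hωR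
        linarith
    · right; exact hkeq
  have hD : ∀ C : Set Ω, MeasurableSet[G lst] C → μ ((B ∩ {ω | 0 < R ω}) ∩ C) ≤ μ C / 2 := by
    intro C hC
    calc μ ((B ∩ {ω | 0 < R ω}) ∩ C) ≤ μ ((E ∩ C) ∪ Nn) := by
          refine measure_mono ?_
          rintro ω ⟨hω1, hω2⟩
          rcases hDsub hω1 with h | h
          · exact Or.inl ⟨h, hω2⟩
          · exact Or.inr h
      _ ≤ μ (E ∩ C) + μ Nn := measure_union_le _ _
      _ = μ C / 2 := by rw [hEC C hC, hNn0, add_zero]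
  have hD' : ∀ C : Set Ω, MeasurableSet[G lst] C → μ C / 2 ≤ μ ((Bᶜ ∪ {ω | 0 ≤ R ω}) ∩ C) := by
    intro C hC
    have hsub2 : (E ∩ C) \ Nn ⊆ (Bᶜ ∪ {ω | 0 ≤ R ω}) ∩ C := by
      rintro ω ⟨⟨hωE, hωC⟩, hωN⟩
      refine ⟨?_, hωC⟩
      have hkeq : kk ω = k0 ω := by
        by_contra hc; exact hωN hc
      rcases le_or_gt 0 (R ω) with h | h
      · exact Or.inr h
      · left
        intro hωB
        have hε1 : ε lst ω = 1 := by simpa [hE] using hωE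
        have h2 : kk ω ≤ ε lst ω * R ω := hkER ω
        rw [hε1, one_mul] at h2
        have h3 : -|R ω| < k0 ω := hωB
        rw [← hkeq] at h3
        have h4 : |R ω| = -R ω := abs_of_neg h
        linarith
    calc μ C / 2 = μ (E ∩ C) := (hEC C hC).symm
      _ = μ ((E ∩ C) \ Nn) := (measure_diff_null hNn0).symm
      _ ≤ μ ((Bᶜ ∪ {ω | 0 ≤ R ω}) ∩ C) := measure_mono hsub2
  -- lintegral halving
  set fplus : Ω → ENNReal := fun ω => ENNReal.ofReal (max (R ω) 0) with hfplus
  set fminus : Ω → ENNReal := fun ω => ENNReal.ofReal (max (-R ω) 0) with hfminus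
  have hfplus𝒢 : Measurable[G lst] fplus := (hRmeas𝒢.max measurable_const).ennreal_ofReal
  have hfminus𝒢 : Measurable[G lst] fminus := (hRmeas𝒢.neg.max measurable_const).ennreal_ofReal
  have hfplusm : Measurable fplus := hfplus𝒢.mono h𝒢 le_rfl
  have hfminusm : Measurable fminus := hfminus𝒢.mono h𝒢 le_rfl
  have hDmeas : MeasurableSet (B ∩ {ω | 0 < R ω}) :=
    hBmeas.inter (measurableSet_lt measurable_const hRmeas)
  have hplus_half : ∫⁻ ω in B, fplus ω ∂μ ≤ (∫⁻ ω, fplus ω ∂μ) / 2 := by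
    have hind : B.indicator fplus = (B ∩ {ω | 0 < R ω}).indicator fplus := by
      funext ω
      by_cases hωB : ω ∈ B
      · by_cases hωR : 0 < R ω
        · rw [Set.indicator_of_mem hωB, Set.indicator_of_mem (Set.mem_inter hωB hωR)]
        · rw [Set.indicator_of_mem hωB, Set.indicator_of_notMem
            (fun h => hωR h.2)]
          simp only [hfplus, max_eq_right (le_of_not_gt hωR), ENNReal.ofReal_zero]
      · rw [Set.indicator_of_notMem hωB, Set.indicator_of_notMem (fun h => hωB h.1)]
    calc ∫⁻ ω in B, fplus ω ∂μ = ∫⁻ ω, B.indicator fplus ω ∂μ :=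
          (lintegral_indicator hBmeas fplus).symm
      _ = ∫⁻ ω, (B ∩ {ω | 0 < R ω}).indicator fplus ω ∂μ := by rw [hind]
      _ = ∫⁻ ω in B ∩ {ω | 0 < R ω}, fplus ω ∂μ := lintegral_indicator hDmeas fplus
      _ ≤ (∫⁻ ω, fplus ω ∂μ) / 2 := lintegral_restrict_le_half μ h𝒢 _ hD fplus hfplus𝒢
  have hfin_minus : ∫⁻ ω, fminus ω ∂μ ≠ ⊤ := by
    have hb : ∀ ω, fminus ω ≤ ENNReal.ofReal (A.card * CP) := by
      intro ω
      refine ENNReal.ofReal_le_ofReal ?_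
      rcases le_or_gt 0 (R ω) with h | h
      · rw [max_eq_right (neg_nonpos_of_nonneg h)]
        positivity
      · rw [max_eq_left (neg_nonneg.mpr h.le)]
        calc -R ω ≤ |R ω| := neg_le_abs _
          _ ≤ A.card * CP := hRabs ω
    refine ne_top_of_le_ne_top (ENNReal.ofReal_ne_top (r := A.card * CP)) ?_
    calc ∫⁻ ω, fminus ω ∂μ ≤ ∫⁻ _ω, ENNReal.ofReal (A.card * CP) ∂μ := lintegral_mono hb
      _ = ENNReal.ofReal (A.card * CP) := by simp [lintegral_const]
  have hfin_plus : ∫⁻ ω, fplus ω ∂μ ≠ ⊤ := by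
    have hb : ∀ ω, fplus ω ≤ ENNReal.ofReal (A.card * CP) := by
      intro ω
      refine ENNReal.ofReal_le_ofReal ?_
      rcases le_or_gt 0 (R ω) with h | h
      · rw [max_eq_left h]
        calc R ω ≤ |R ω| := le_abs_self _
          _ ≤ A.card * CP := hRabs ω
      · rw [max_eq_right h.le]
        positivity
    refine ne_top_of_le_ne_top (ENNReal.ofReal_ne_top (r := A.card * CP)) ?_
    calc ∫⁻ ω, fplus ω ∂μ ≤ ∫⁻ _ω, ENNReal.ofReal (A.card * CP) ∂μ := lintegral_mono hb
      _ = ENNReal.ofReal (A.card * CP) := by simp [lintegral_const]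
  have hminus_half : ∫⁻ ω in B, fminus ω ∂μ ≤ (∫⁻ ω, fminus ω ∂μ) / 2 := by
    set D' : Set Ω := Bᶜ ∪ {ω | 0 ≤ R ω} with hD'def
    have hD'meas : MeasurableSet D' :=
      hBmeas.compl.union (measurableSet_le measurable_const hRmeas)
    have h1 : (∫⁻ ω, fminus ω ∂μ) / 2 ≤ ∫⁻ ω in D', fminus ω ∂μ :=
      lintegral_restrict_ge_half μ h𝒢 _ hD' fminus hfminus𝒢
    have hind : D'.indicator fminus = Bᶜ.indicator fminus := by
      funext ω
      by_cases hωB : ω ∈ Bᶜ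
      · rw [Set.indicator_of_mem (Set.mem_union_left _ hωB), Set.indicator_of_mem hωB]
      · by_cases hωR : ω ∈ D'
        · rcases hωR with h | h
          · exact absurd h hωB
          · rw [Set.indicator_of_mem (Set.mem_union_right _ h), Set.indicator_of_notMem hωB]
            have hmax : max (-R ω) 0 = 0 := max_eq_right (neg_nonpos_of_nonneg h)
            simp only [hfminus, hmax, ENNReal.ofReal_zero]
        · rw [Set.indicator_of_notMem hωR, Set.indicator_of_notMem hωB]
    have h2 : ∫⁻ ω in D', fminus ω ∂μ = ∫⁻ ω in Bᶜ, fminus ω ∂μ := by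
      rw [← lintegral_indicator hD'meas fminus, hind, lintegral_indicator hBmeas.compl fminus]
    have h3 : (∫⁻ ω in B, fminus ω ∂μ) + ∫⁻ ω in Bᶜ, fminus ω ∂μ = ∫⁻ ω, fminus ω ∂μ :=
      lintegral_add_compl fminus hBmeas
    have hyS : (∫⁻ ω, fminus ω ∂μ) / 2 ≤ ∫⁻ ω in Bᶜ, fminus ω ∂μ := h1.trans h2.le
    have hyfin : ∫⁻ ω in Bᶜ, fminus ω ∂μ ≠ ⊤ := by
      intro hc
      rw [hc, add_top] at h3
      exact hfin_minus h3.symm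
    calc ∫⁻ ω in B, fminus ω ∂μ
        = (∫⁻ ω, fminus ω ∂μ) - ∫⁻ ω in Bᶜ, fminus ω ∂μ := by
          rw [← h3, ENNReal.add_sub_cancel_right hyfin]
      _ ≤ (∫⁻ ω, fminus ω ∂μ) - (∫⁻ ω, fminus ω ∂μ) / 2 := tsub_le_tsub_left hyS _
      _ = (∫⁻ ω, fminus ω ∂μ) / 2 := ENNReal.sub_half hfin_minus
  have habs_id : ∀ ω, ENNReal.ofReal |R ω| = fplus ω + fminus ω := by
    intro ω
    rcases le_or_gt 0 (R ω) with h | h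
    · rw [abs_of_nonneg h]
      simp only [hfplus, hfminus, max_eq_left h, max_eq_right (neg_nonpos_of_nonneg h),
        ENNReal.ofReal_zero, add_zero]
    · rw [abs_of_neg h]
      simp only [hfplus, hfminus, max_eq_right h.le, max_eq_left (neg_nonneg.mpr h.le),
        ENNReal.ofReal_zero, zero_add]
  have hBhalf : ∫⁻ ω in B, ENNReal.ofReal |R ω| ∂μ ≤ (∫⁻ ω, ENNReal.ofReal |R ω| ∂μ) / 2 := by
    have e1 : ∀ᵐ ω ∂(μ.restrict B), ENNReal.ofReal |R ω| = fplus ω + fminus ω :=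
      Filter.Eventually.of_forall habs_id
    calc ∫⁻ ω in B, ENNReal.ofReal |R ω| ∂μ
        = ∫⁻ ω in B, (fplus ω + fminus ω) ∂μ := lintegral_congr_ae e1
      _ = (∫⁻ ω in B, fplus ω ∂μ) + ∫⁻ ω in B, fminus ω ∂μ :=
          lintegral_add_left (hfplusm) _
      _ ≤ (∫⁻ ω, fplus ω ∂μ) / 2 + (∫⁻ ω, fminus ω ∂μ) / 2 :=
          add_le_add hplus_half hminus_half
      _ = ((∫⁻ ω, fplus ω ∂μ) + (∫⁻ ω, fminus ω ∂μ)) / 2 :=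
          (ENNReal.div_add_div_same).symm ▸ rfl
      _ = (∫⁻ ω, ENNReal.ofReal |R ω| ∂μ) / 2 := by
          rw [← lintegral_add_left hfplusm]
          exact congrArg (· / 2) (lintegral_congr_ae
            (Filter.Eventually.of_forall fun ω => (habs_id ω).symm))
  -- Bochner halving
  have hRabsint : Integrable (fun ω => |R ω|) μ :=
    integrable_of_bound μ _ hRmeas.abs.aestronglyMeasurable (A.card * CP)
      (fun ω => by rw [abs_abs]; exact hRabs ω)
  have hBR : ∫ ω in B, |R ω| ∂μ ≤ (∫ ω, |R ω| ∂μ) / 2 := by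
    have e1 : ∫ ω in B, |R ω| ∂μ = (∫⁻ ω in B, ENNReal.ofReal |R ω| ∂μ).toReal :=
      integral_eq_lintegral_of_nonneg_ae (Filter.Eventually.of_forall fun ω => abs_nonneg _)
        hRmeas.abs.aestronglyMeasurable.restrict
    have e2 : ∫ ω, |R ω| ∂μ = (∫⁻ ω, ENNReal.ofReal |R ω| ∂μ).toReal :=
      integral_eq_lintegral_of_nonneg_ae (Filter.Eventually.of_forall fun ω => abs_nonneg _)
        hRmeas.abs.aestronglyMeasurable
    have hStot : ∫⁻ ω, ENNReal.ofReal |R ω| ∂μ ≠ ⊤ := by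
      have : ∀ ω, ENNReal.ofReal |R ω| = fplus ω + fminus ω := habs_id
      rw [lintegral_congr_ae (Filter.Eventually.of_forall this),
        lintegral_add_left hfplusm]
      exact ENNReal.add_ne_top.mpr ⟨hfin_plus, hfin_minus⟩
    rw [e1, e2]
    have h2 : ((∫⁻ ω, ENNReal.ofReal |R ω| ∂μ) / 2).toReal
        = (∫⁻ ω, ENNReal.ofReal |R ω| ∂μ).toReal / 2 := by
      rw [ENNReal.toReal_div]; norm_num
    rw [← h2]
    exact ENNReal.toReal_mono (by
      exact ne_top_of_le_ne_top hStot ENNReal.half_le_self) hBhalf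
  -- integrability of kk
  have hgle : ∀ ω, g ω ≤ (m + 1) * (1 / (4 * lam)) := by
    intro ω
    refine Finset.sup'_le hA _ fun a ha => ?_
    calc (∑ t, (a t (s t ω) * ε t ω - lam * (a t (s t ω)) ^ 2))
        ≤ ∑ _t : Fin (m + 1), (1 / (4 * lam)) :=
          Finset.sum_le_sum fun t _ => term_le' hlam _ _ (hεval t ω)
      _ = (m + 1) * (1 / (4 * lam)) := by
          rw [Finset.sum_const, nsmul_eq_mul]
          simp
  set CG : ℝ := Real.exp (2 * lam * ((m + 1) * (1 / (4 * lam)))) with hCG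
  have hexpg_bd : ∀ ω, Real.exp (2 * lam * g ω) ≤ CG := fun ω =>
    Real.exp_le_exp.mpr (mul_le_mul_of_nonneg_left (hgle ω) (by positivity))
  have hexpg_aesm : AEStronglyMeasurable (fun ω => Real.exp (2 * lam * g ω)) μ := by
    have hc : Continuous fun x : ℝ => Real.exp (2 * lam * x) :=
      Real.continuous_exp.comp (continuous_const.mul continuous_id)
    exact hc.comp_aestronglyMeasurable hgaesm
  have hIntexpg : Integrable (fun ω => Real.exp (2 * lam * g ω)) μ :=
    integrable_of_bound μ _ hexpg_aesm CG
      (fun ω => by rw [abs_of_pos (Real.exp_pos _)]; exact hexpg_bd ω)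
  have hIntkk : Integrable kk μ := hIntexpg.sub hIntM
  have hIntk0 : Integrable k0 μ := hIntkk.congr hkk0
  -- ∫ kk ≤ 0
  have hik : ∫ ω, kk ω ∂μ ≤ 0 := by
    have h4 : ∫ ω, kk ω ∂μ = ∫ ω, k0 ω ∂μ := integral_congr_ae hkk0
    have h5 : (∫ ω in B, k0 ω ∂μ) + ∫ ω in Bᶜ, k0 ω ∂μ = ∫ ω, k0 ω ∂μ :=
      integral_add_compl hBmeas hIntk0
    have hk0R : k0 ≤ᵐ[μ] fun ω => |R ω| :=
      hkk0.symm.mono fun ω h => by rw [h]; exact hkabs ω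
    have h6 : ∫ ω in B, k0 ω ∂μ ≤ ∫ ω in B, |R ω| ∂μ :=
      setIntegral_mono_ae hIntk0.integrableOn hRabsint.integrableOn hk0R
    have h7 : ∫ ω in Bᶜ, k0 ω ∂μ ≤ ∫ ω in Bᶜ, -|R ω| ∂μ := by
      refine setIntegral_mono_on hIntk0.integrableOn (hRabsint.neg.integrableOn)
        hBmeas.compl fun ω hω => ?_
      have : ¬ (-|R ω| < k0 ω) := hω
      linarith [not_lt.mp this]
    have h8 : ∫ ω in Bᶜ, -|R ω| ∂μ = -∫ ω in Bᶜ, |R ω| ∂μ := integral_neg _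
    have h9 : (∫ ω in B, |R ω| ∂μ) + ∫ ω in Bᶜ, |R ω| ∂μ = ∫ ω, |R ω| ∂μ :=
      integral_add_compl hBmeas hRabsint
    rw [h4, ← h5]
    have := hBR
    linarith
  -- ∫ exp(2λg) ≤ card
  have hexpint : ∫ ω, Real.exp (2 * lam * g ω) ∂μ ≤ (A.card : ℝ) := by
    have hdec : (fun ω => Real.exp (2 * lam * g ω)) = fun ω => kk ω + M ω := by
      funext ω; simp only [hkk]; ring
    rw [hdec, integral_add hIntkk hIntM]
    linarith
  -- final chain
  set c : ℝ := Real.log A.card / (2 * lam) with hc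
  have hgpt : ∀ ω, g ω ≤ c + (Real.exp (2 * lam * g ω) / A.card - 1) / (2 * lam) := by
    intro ω
    have h1 := Real.add_one_le_exp (2 * lam * (g ω - c))
    have h2 : Real.exp (2 * lam * (g ω - c))
        = Real.exp (2 * lam * g ω) * Real.exp (-(2 * lam * c)) := by
      rw [← Real.exp_add]; ring_nf
    have h3 : Real.exp (-(2 * lam * c)) = (A.card : ℝ)⁻¹ := by
      have h4 : 2 * lam * c = Real.log A.card := by
        rw [hc]; field_simp
      rw [h4, Real.exp_neg, Real.exp_log hNpos]
    rw [h2, h3] at h1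
    have h5 : 2 * lam * (g ω - c) ≤ Real.exp (2 * lam * g ω) / A.card - 1 := by
      rw [div_eq_mul_inv]; linarith
    have h6 : (0:ℝ) < 2 * lam := by positivity
    calc g ω = c + (2 * lam * (g ω - c)) / (2 * lam) := by field_simp; ring
      _ ≤ c + (Real.exp (2 * lam * g ω) / A.card - 1) / (2 * lam) := by gcongr
  have hIntrhs : Integrable
      (fun ω => c + (Real.exp (2 * lam * g ω) / A.card - 1) / (2 * lam)) μ := by
    refine (integrable_const c).add ?_
    exact ((hIntexpg.div_const _).sub (integrable_const 1)).div_const _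
  calc ∫ ω, g ω ∂μ
      ≤ ∫ ω, (c + (Real.exp (2 * lam * g ω) / A.card - 1) / (2 * lam)) ∂μ :=
        integral_mono hInt hIntrhs hgpt
    _ = ∫ ω, ((c - 1 / (2 * lam)) + (1 / (2 * lam * A.card)) * Real.exp (2 * lam * g ω)) ∂μ := by
        refine integral_congr_ae (Filter.Eventually.of_forall fun ω => ?_)
        exact alg_id c _ _ _ (ne_of_gt hNpos) (by positivity)
    _ = (c - 1 / (2 * lam)) + (1 / (2 * lam * A.card)) * ∫ ω, Real.exp (2 * lam * g ω) ∂μ := by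
        rw [integral_add (integrable_const _) (hIntexpg.const_mul _), integral_const,
          integral_const_mul]
        simp [measure_univ]
    _ ≤ c := by
        have hpos : (0:ℝ) < 1 / (2 * lam * A.card) := by positivity
        have h7 : (1 / (2 * lam * A.card)) * (∫ ω, Real.exp (2 * lam * g ω) ∂μ)
            ≤ (1 / (2 * lam * A.card)) * A.card := by
          exact mul_le_mul_of_nonneg_left hexpint hpos.le
        have h8 : (1 / (2 * lam * A.card)) * (A.card : ℝ) = 1 / (2 * lam) := by
          rw [div_mul_eq_mul_div, one_mul, mul_comm (2 * lam) (A.card : ℝ), ← div_div,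
            div_self (ne_of_gt hNpos)]
        linarith
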